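/- Consider the Lindley-type recursion W₁ = (c − D₁)⁺ and W_n = (W_{n−1} + c − D_n)⁺ for n ≥ 2, where D₁, D₂, … are i.i.d. nonnegative integer-valued random variables and c ≥ 0 is a constant with c ≤ E[D₁]. Then for every n ≥ 1, E[W_n] = ∑_{j=1}^n (1/j) · E[(j·c − ∑_{i=1}^j D_i)⁺]. -/

import Mathlib

open MeasureTheory ProbabilityTheory

/-- partial sums -/
def psum (v : ℕ → ℝ) (k : ℕ) : ℝ := ∑ i ∈ Finset.range k, v i

/-- running maximum `max (0, S₁, …, S_k)` -/
def msup (v : ℕ → ℝ) : ℕ → ℝ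
  | 0 => 0
  | k + 1 => max (msup v k) (psum v (k + 1))

lemma psum_zero (v : ℕ → ℝ) : psum v 0 = 0 := by simp [psum]

lemma msup_nonneg (v : ℕ → ℝ) (k : ℕ) : 0 ≤ msup v k := by
  induction k with
  | zero => simp [msup]
  | succ k ih => exact le_trans ih (le_max_left _ _)

lemma msup_le_sum_abs (v : ℕ → ℝ) (k : ℕ) : msup v k ≤ ∑ i ∈ Finset.range k, |v i| := by
  induction k with
  | zero => simp [msup]
  | succ k ih =>
    refine max_le (ih.trans ?_) ?_
    · exact Finset.sum_le_sum_of_subset_of_nonneg (Finset.range_subset_range.2 (Nat.le_succ k))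
        (fun i _ _ => abs_nonneg _)
    · exact (Finset.sum_le_sum fun i _ => le_abs_self (v i))

lemma psum_congr {v w : ℕ → ℝ} (k : ℕ) (h : ∀ i < k, v i = w i) : psum v k = psum w k :=
  Finset.sum_congr rfl fun i hi => h i (Finset.mem_range.1 hi)

lemma msup_congr {v w : ℕ → ℝ} (k : ℕ) (h : ∀ i < k, v i = w i) : msup v k = msup w k := by
  induction k with
  | zero => rfl
  | succ k ih =>
    simp only [msup]
    rw [ih (fun i hi => h i (hi.trans (Nat.lt_succ_self k))), psum_congr _ h]

lemma range_nonempty' (k : ℕ) : (Finset.range (k+1)).Nonempty := ⟨0, by simp⟩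

lemma msup_eq_sup' (v : ℕ → ℝ) (k : ℕ) :
    msup v k = (Finset.range (k+1)).sup' (range_nonempty' k) (psum v) := by
  induction k with
  | zero => simp [msup, psum]
  | succ k ih =>
    have h1 : (Finset.range (k+1+1)).sup' (range_nonempty' (k+1)) (psum v)
        = (insert (k+1) (Finset.range (k+1))).sup'
            (Finset.range_add_one (n := k+1) ▸ range_nonempty' (k+1)) (psum v) :=
      Finset.sup'_congr _ (Finset.range_add_one (n := k+1)) (fun _ _ => rfl)
    rw [h1, Finset.sup'_insert]
    simp only [msup, ih]
    rw [max_comm]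

lemma range_succ_eq_insert_image (n : ℕ) :
    Finset.range (n+1) = insert 0 ((Finset.range n).image (· + 1)) := by
  ext x
  simp only [Finset.mem_range, Finset.mem_insert, Finset.mem_image]
  constructor
  · intro hx
    cases x with
    | zero => exact Or.inl rfl
    | succ y => exact Or.inr ⟨y, by omega, rfl⟩
  · rintro (rfl | ⟨y, hy, rfl⟩) <;> omega

/-- Lindley step for the running max. -/
lemma msup_succ_shift (u : ℕ → ℝ) (k : ℕ) :
    msup u (k+1) = max (msup (fun i => u (i+1)) k + u 0) 0 := by
  have h0 : ∀ j, psum u (j+1) = u 0 + psum (fun i => u (i+1)) j := by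
    intro j
    rw [psum, Finset.sum_range_succ']
    simp [psum, add_comm]
  have himg : ((Finset.range (k+1)).image (· + 1)).Nonempty := by
    simpa using range_nonempty' k
  have h1 : (Finset.range (k+1+1)).sup' (range_nonempty' (k+1)) (psum u)
      = (insert 0 ((Finset.range (k+1)).image (· + 1))).sup'
          (range_succ_eq_insert_image (k+1) ▸ range_nonempty' (k+1)) (psum u) :=
    Finset.sup'_congr _ (range_succ_eq_insert_image (k+1)) (fun _ _ => rfl)
  have h2 : ((Finset.range (k+1)).image (· + 1)).sup' himg (psum u)
      = (Finset.range (k+1)).sup' (range_nonempty' k) (fun j => psum u (j+1)) := by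
    rw [Finset.sup'_image himg (psum u)]; rfl
  have h3 : (Finset.range (k+1)).sup' (range_nonempty' k) (fun j => psum u (j+1))
      = u 0 + (Finset.range (k+1)).sup' (range_nonempty' k) (psum (fun i => u (i+1))) := by
    rw [Finset.comp_sup'_eq_sup'_comp (range_nonempty' k)
      (f := psum (fun i => u (i+1))) (g := fun x => u 0 + x)
      (fun x y => (max_add_add_left (u 0) x y).symm)]
    exact Finset.sup'_congr _ rfl (fun j _ => h0 j)
  rw [msup_eq_sup' u (k+1), h1, Finset.sup'_insert, h2, h3, psum_zero,
    msup_eq_sup' (fun i => u (i+1)) k]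
  rw [max_comm, add_comm]
  exact himg

section cycle

variable (v : ℕ → ℝ) (n : ℕ)

/-- periodic extension -/
def wper (v : ℕ → ℝ) (n j : ℕ) : ℝ := v (j % n)

/-- partial sums of the periodic extension -/
def Uex (v : ℕ → ℝ) (n j : ℕ) : ℝ := psum (wper v n) j

lemma psum_shift (w : ℕ → ℝ) (t k : ℕ) :
    psum (fun i => w (t + i)) k = psum w (t + k) - psum w t := by
  rw [psum, psum, psum, ← Finset.sum_Ico_eq_sub _ (Nat.le_add_right t k),
    Finset.sum_Ico_eq_sum_range]
  simp

lemma Uex_period (j : ℕ) : Uex v n (j + n) = Uex v n j + Uex v n n := by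
  have h1 : psum (fun i => wper v n (n + i)) j = Uex v n (n + j) - Uex v n n :=
    psum_shift (wper v n) n j
  have h2 : (fun i => wper v n (n + i)) = wper v n := by
    funext i; simp [wper, Nat.add_comm n i, Nat.add_mod_right]
  rw [h2] at h1
  have : psum (wper v n) j = Uex v n j := rfl
  rw [this] at h1
  have hcomm : j + n = n + j := Nat.add_comm j n
  rw [hcomm]
  linarith [h1]

lemma range_n_nonempty (hn : 1 ≤ n) : (Finset.range n).Nonempty :=
  ⟨0, Finset.mem_range.2 hn⟩

/-- window sup of period-extended partial sums -/
noncomputable def Awin (v : ℕ → ℝ) (n : ℕ) (hn : 1 ≤ n) (t : ℕ) : ℝ :=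
  (Finset.range n).sup' (range_n_nonempty n hn) (fun j => Uex v n (t + j))

lemma msup_cyc_eq (hn : 1 ≤ n) (t k : ℕ) :
    Uex v n t + msup (fun i => wper v n (t + i)) k
      = (Finset.range (k+1)).sup' (range_nonempty' k) (fun j => Uex v n (t + j)) := by
  rw [msup_eq_sup']
  rw [Finset.comp_sup'_eq_sup'_comp (range_nonempty' k)
    (f := psum (fun i => wper v n (t + i))) (g := fun x => Uex v n t + x)
    (fun x y => (max_add_add_left (Uex v n t) x y).symm)]
  refine Finset.sup'_congr _ rfl (fun j _ => ?_)
  show Uex v n t + psum (fun i => wper v n (t + i)) j = Uex v n (t + j)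
  rw [psum_shift (wper v n) t j]
  show Uex v n t + (Uex v n (t+j) - Uex v n t) = Uex v n (t + j)
  ring

lemma Bsup_eq_max_right (hn : 1 ≤ n) (t : ℕ) :
    (Finset.range (n+1)).sup' (range_nonempty' n) (fun j => Uex v n (t + j))
      = max (Uex v n (t + n)) (Awin v n hn t) := by
  have h1 : (Finset.range (n+1)).sup' (range_nonempty' n) (fun j => Uex v n (t + j))
      = (insert n (Finset.range n)).sup'
          (Finset.range_add_one (n := n) ▸ range_nonempty' n) (fun j => Uex v n (t + j)) :=
    Finset.sup'_congr _ (Finset.range_add_one (n := n)) (fun _ _ => rfl)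
  rw [h1, Finset.sup'_insert]
  rfl

lemma Bsup_eq_max_left (hn : 1 ≤ n) (t : ℕ) :
    (Finset.range (n+1)).sup' (range_nonempty' n) (fun j => Uex v n (t + j))
      = max (Uex v n t) (Awin v n hn (t + 1)) := by
  have himg : ((Finset.range n).image (· + 1)).Nonempty :=
    (Finset.nonempty_range_iff.2 (by omega)).image _
  have h1 : (Finset.range (n+1)).sup' (range_nonempty' n) (fun j => Uex v n (t + j))
      = (insert 0 ((Finset.range n).image (· + 1))).sup'
          (range_succ_eq_insert_image n ▸ range_nonempty' n) (fun j => Uex v n (t + j)) :=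
    Finset.sup'_congr _ (range_succ_eq_insert_image n) (fun _ _ => rfl)
  have h2 : ((Finset.range n).image (· + 1)).sup' himg (fun j => Uex v n (t + j))
      = Awin v n hn (t + 1) := by
    rw [Finset.sup'_image himg (fun j => Uex v n (t + j))]
    refine Finset.sup'_congr _ rfl (fun j _ => ?_)
    show Uex v n (t + (j + 1)) = Uex v n (t + 1 + j)
    congr 1; omega
  rw [h1, Finset.sup'_insert, h2]
  norm_num
  exact himg

lemma msup_cyc_nsub1 (hn : 1 ≤ n) (t : ℕ) :
    Uex v n t + msup (fun i => wper v n (t + i)) (n - 1) = Awin v n hn t := by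
  rw [msup_cyc_eq v n hn t (n - 1)]
  exact Finset.sup'_congr _ (by rw [Nat.sub_add_cancel hn]) (fun _ _ => rfl)

/-- The key combinatorial cycle lemma. -/
lemma cycle_sum (hn : 1 ≤ n) :
    ∑ t ∈ Finset.range n,
        (msup (fun i => v ((t + i) % n)) n - msup (fun i => v ((t + i) % n)) (n - 1))
      = max (psum v n) 0 := by
  have hUn : Uex v n n = psum v n := by
    unfold Uex psum
    refine Finset.sum_congr rfl (fun i hi => ?_)
    simp [wper, Nat.mod_eq_of_lt (Finset.mem_range.1 hi)]
  set S := Uex v n n with hS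
  have hcycw : ∀ t, (fun i => v ((t + i) % n)) = (fun i => wper v n (t + i)) := by
    intro t; rfl
  -- each term equals Bsup t - Awin t
  have hterm : ∀ t, msup (fun i => v ((t + i) % n)) n - msup (fun i => v ((t + i) % n)) (n - 1)
      = (Finset.range (n+1)).sup' (range_nonempty' n) (fun j => Uex v n (t + j))
        - Awin v n hn t := by
    intro t
    rw [hcycw t]
    have e1 := msup_cyc_eq v n hn t n
    have e2 := msup_cyc_nsub1 v n hn t
    linarith [e1, e2]
  have hUt : ∀ t, Uex v n (t + n) = Uex v n t + S := fun t => Uex_period v n t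
  have hUle : ∀ t, Uex v n t ≤ Awin v n hn t := by
    intro t
    have h0 : Uex v n (t + 0) ≤ Awin v n hn t :=
      Finset.le_sup' (fun j => Uex v n (t + j)) (Finset.mem_range.2 hn)
    simp only [Nat.add_zero] at h0
    exact h0
  by_cases hSpos : S ≤ 0
  · -- every term vanishes
    have : ∀ t ∈ Finset.range n, msup (fun i => v ((t + i) % n)) n
        - msup (fun i => v ((t + i) % n)) (n - 1) = 0 := by
      intro t _
      rw [hterm t, Bsup_eq_max_right v n hn t]
      have h1 : Uex v n (t + n) ≤ Awin v n hn t := by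
        rw [hUt t]; linarith [hUle t]
      rw [max_eq_right h1]; ring
    have hps : psum v n ≤ 0 := hUn ▸ hSpos
    rw [Finset.sum_eq_zero this]
    exact (max_eq_right hps).symm
  · push_neg at hSpos
    have hBA : ∀ t, (Finset.range (n+1)).sup' (range_nonempty' n) (fun j => Uex v n (t + j))
        = Awin v n hn (t + 1) := by
      intro t
      rw [Bsup_eq_max_left v n hn t]
      have h1 : Uex v n t ≤ Awin v n hn (t + 1) := by
        have hmem : n - 1 ∈ Finset.range n := Finset.mem_range.2 (by omega)
        have := Finset.le_sup' (fun j => Uex v n (t + 1 + j)) hmem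
        have heq : t + 1 + (n - 1) = t + n := by omega
        rw [heq] at this
        have : Uex v n t + S ≤ Awin v n hn (t + 1) := by rw [← hUt t]; exact this
        linarith
      exact max_eq_right h1
    have : ∑ t ∈ Finset.range n,
        (msup (fun i => v ((t + i) % n)) n - msup (fun i => v ((t + i) % n)) (n - 1))
        = ∑ t ∈ Finset.range n, (Awin v n hn (t + 1) - Awin v n hn t) := by
      refine Finset.sum_congr rfl (fun t _ => ?_)
      rw [hterm t, hBA t]
    rw [this, Finset.sum_range_sub (f := Awin v n hn)]
    -- Awin n = Awin 0 + S
    have hAn : Awin v n hn n = Awin v n hn 0 + S := by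
      unfold Awin
      rw [Finset.comp_sup'_eq_sup'_comp (range_n_nonempty n hn)
        (f := fun j => Uex v n (0 + j)) (g := fun x => x + S)
        (fun x y => (max_add_add_right x y S).symm)]
      refine Finset.sup'_congr _ rfl (fun j _ => ?_)
      show Uex v n (n + j) = Uex v n (0 + j) + S
      rw [Nat.add_comm n j, hUt j, Nat.zero_add]
    rw [hAn, ← hUn]
    have : max S 0 = S := max_eq_left hSpos.le
    rw [this]; ring

end cycle

section prob

variable {Ω : Type*} [MeasurableSpace Ω] {μ : Measure Ω} [IsProbabilityMeasure μ]
  {D : ℕ → Ω → ℝ}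

/-- The joint law of an injectively reindexed iid family is the product of the common law. -/
lemma joint_map_eq_pi (hDmeas : ∀ i, Measurable (D i))
    (hindep : iIndepFun D μ)
    (hident : ∀ i j, Measure.map (D i) μ = Measure.map (D j) μ)
    {m : ℕ} (σ : Fin m → ℕ) (hσ : Function.Injective σ) :
    Measure.map (fun ω (i : Fin m) => D (σ i) ω) μ
      = Measure.pi (fun _ => Measure.map (D 1) μ) := by
  classical
  have hmeasvec : Measurable (fun ω (i : Fin m) => D (σ i) ω) :=
    measurable_pi_lambda _ (fun i => hDmeas (σ i))
  haveI : ∀ i : Fin m, IsProbabilityMeasure (Measure.map (D 1) μ) := fun _ =>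
    Measure.isProbabilityMeasure_map (hDmeas 1).aemeasurable
  refine (Measure.pi_eq fun s hs => ?_).symm
  rw [Measure.map_apply hmeasvec (MeasurableSet.univ_pi hs)]
  have hpre : (fun ω (i : Fin m) => D (σ i) ω) ⁻¹' (Set.pi Set.univ s)
      = ⋂ i : Fin m, D (σ i) ⁻¹' s i := by
    ext ω; simp [Set.mem_pi]
  rw [hpre]
  set sets : ℕ → Set ℝ := fun j => if h : ∃ i, σ i = j then s h.choose else Set.univ with hsets
  have hsetsσ : ∀ i, sets (σ i) = s i := by
    intro i
    have h : ∃ i', σ i' = σ i := ⟨i, rfl⟩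
    have hc : h.choose = i := hσ h.choose_spec
    simp [hsets, dif_pos h, hc]
  have hsets_meas : ∀ j, j ∈ Finset.image σ Finset.univ → MeasurableSet (sets j) := by
    intro j _
    by_cases h : ∃ i, σ i = j
    · rw [hsets]; simp only [dif_pos h]; exact hs _
    · rw [hsets]; simp only [dif_neg h]; exact MeasurableSet.univ
  have h1 : (⋂ i : Fin m, D (σ i) ⁻¹' s i)
      = ⋂ j ∈ Finset.image σ Finset.univ, D j ⁻¹' sets j := by
    rw [Finset.set_biInter_finset_image]
    simp [hsetsσ]
  rw [h1, hindep.measure_inter_preimage_eq_mul _ hsets_meas,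
    Finset.prod_image (fun a _ b _ h => hσ h)]
  refine (Finset.prod_congr rfl (fun i _ => ?_)).symm
  rw [hsetsσ i, ← Measure.map_apply (hDmeas (σ i)) (hs i), hident (σ i) 1]

/-- Transfer of expectations between injectively reindexed iid vectors. -/
lemma integral_comp_vec_eq (hDmeas : ∀ i, Measurable (D i))
    (hindep : iIndepFun D μ)
    (hident : ∀ i j, Measure.map (D i) μ = Measure.map (D j) μ)
    {m : ℕ} (σ τ : Fin m → ℕ) (hσ : Function.Injective σ) (hτ : Function.Injective τ)
    (g : (Fin m → ℝ) → ℝ) (hg : Measurable g) :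
    ∫ ω, g (fun i => D (σ i) ω) ∂μ = ∫ ω, g (fun i => D (τ i) ω) ∂μ := by
  have hσm : Measurable (fun ω (i : Fin m) => D (σ i) ω) :=
    measurable_pi_lambda _ (fun i => hDmeas (σ i))
  have hτm : Measurable (fun ω (i : Fin m) => D (τ i) ω) :=
    measurable_pi_lambda _ (fun i => hDmeas (τ i))
  have e1 : ∫ ω, g (fun i => D (σ i) ω) ∂μ
      = ∫ y, g y ∂(Measure.map (fun ω (i : Fin m) => D (σ i) ω) μ) := by
    rw [integral_map hσm.aemeasurable hg.aestronglyMeasurable]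
  have e2 : ∫ ω, g (fun i => D (τ i) ω) ∂μ
      = ∫ y, g y ∂(Measure.map (fun ω (i : Fin m) => D (τ i) ω) μ) := by
    rw [integral_map hτm.aemeasurable hg.aestronglyMeasurable]
  rw [e1, e2, joint_map_eq_pi hDmeas hindep hident σ hσ,
    joint_map_eq_pi hDmeas hindep hident τ hτ]

end prob

section functional

/-- extension of a finite vector to `ℕ`, as increments `c - xᵢ` -/
noncomputable def extv (c : ℝ) (m : ℕ) (x : Fin m → ℝ) : ℕ → ℝ :=
  fun i => if h : i < m then c - x ⟨i, h⟩ else 0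

lemma measurable_psum_extv (c : ℝ) (m j : ℕ) :
    Measurable (fun x : Fin m → ℝ => psum (extv c m x) j) := by
  unfold psum
  refine Finset.measurable_sum _ (fun i _ => ?_)
  unfold extv
  by_cases h : i < m
  · simp only [dif_pos h]
    exact (measurable_const.sub (measurable_pi_apply _))
  · simp only [dif_neg h]
    exact measurable_const

lemma measurable_msup_extv (c : ℝ) (m k : ℕ) :
    Measurable (fun x : Fin m → ℝ => msup (extv c m x) k) := by
  induction k with
  | zero => exact measurable_const
  | succ k ih => exact ih.max (measurable_psum_extv c m (k+1))

end functional

section main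

variable {Ω : Type*} [MeasurableSpace Ω] {μ : Measure Ω} [IsProbabilityMeasure μ]
  {D : ℕ → Ω → ℝ}

lemma measurable_msup_D (hDmeas : ∀ i, Measurable (D i)) (c : ℝ) (e : ℕ → ℕ) (k : ℕ) :
    Measurable (fun ω => msup (fun i => c - D (e i) ω) k) := by
  induction k with
  | zero => exact measurable_const
  | succ k ih =>
    refine ih.max ?_
    unfold psum
    exact Finset.measurable_sum _ (fun i _ => measurable_const.sub (hDmeas (e i)))

lemma abs_c_sub_le (c x : ℝ) : |c - x| ≤ |c| + |x| := by
  calc |c - x| = |c + (-x)| := by ring_nf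
  _ ≤ |c| + |(-x)| := abs_add_le _ _
  _ = |c| + |x| := by rw [abs_neg]

lemma integrable_msup_D (hDmeas : ∀ i, Measurable (D i)) (hDint : ∀ i, Integrable (D i) μ)
    (c : ℝ) (e : ℕ → ℕ) (k : ℕ) :
    Integrable (fun ω => msup (fun i => c - D (e i) ω) k) μ := by
  refine Integrable.mono' (g := fun ω => ∑ i ∈ Finset.range k, (|c| + |D (e i) ω|))
    (integrable_finset_sum _ fun i _ => (integrable_const _).add (hDint (e i)).abs)
    (measurable_msup_D hDmeas c e k).aestronglyMeasurable ?_
  filter_upwards with ω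
  rw [Real.norm_eq_abs, abs_of_nonneg (msup_nonneg _ _)]
  exact (msup_le_sum_abs _ _).trans
    (Finset.sum_le_sum fun i _ => abs_c_sub_le c (D (e i) ω))

lemma integrable_maxpsum (hDmeas : ∀ i, Measurable (D i)) (hDint : ∀ i, Integrable (D i) μ)
    (c : ℝ) (m : ℕ) :
    Integrable (fun ω => max (psum (fun i => c - D (i+1) ω) m) 0) μ := by
  refine Integrable.mono' (g := fun ω => ∑ i ∈ Finset.range m, (|c| + |D (i+1) ω|))
    (integrable_finset_sum _ fun i _ => (integrable_const _).add (hDint (i+1)).abs)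
    ?_ ?_
  · refine Measurable.aestronglyMeasurable (Measurable.max ?_ measurable_const)
    unfold psum
    exact Finset.measurable_sum _ (fun i _ => measurable_const.sub (hDmeas (i+1)))
  · filter_upwards with ω
    rw [Real.norm_eq_abs, abs_of_nonneg (le_max_right _ _)]
    refine max_le ?_ (Finset.sum_nonneg fun i _ => by positivity)
    calc psum (fun i => c - D (i+1) ω) m ≤ ∑ i ∈ Finset.range m, |c - D (i+1) ω| :=
          Finset.sum_le_sum fun i _ => le_abs_self _
    _ ≤ _ := Finset.sum_le_sum fun i _ => abs_c_sub_le c (D (i+1) ω)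

/-- Restricting the extension to a composition with an index map. -/
lemma comp_msup_eq (c : ℝ) (m k : ℕ) (hk : k ≤ m) (e : ℕ → ℕ) (z : ℕ → ℝ) :
    msup (extv c m (fun i : Fin m => z (e i.val))) k = msup (fun i => c - z (e i)) k :=
  msup_congr k (fun i hi => by simp [extv, dif_pos (lt_of_lt_of_le hi hk)])

lemma cyc_inj (m t : ℕ) : Function.Injective (fun i : Fin m => (t + i.val) % m + 1) := by
  intro i j h
  simp only [add_left_inj] at h
  have h1 : (t + i.val) ≡ (t + j.val) [MOD m] := h
  have h2 : i.val ≡ j.val [MOD m] := Nat.ModEq.add_left_cancel' t h1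
  have h3 : i.val % m = j.val % m := h2
  rw [Nat.mod_eq_of_lt i.isLt, Nat.mod_eq_of_lt j.isLt] at h3
  exact Fin.ext h3

/-- The key step: expectation of running max increments. -/
lemma step_identity (hDmeas : ∀ i, Measurable (D i))
    (hindep : iIndepFun D μ)
    (hident : ∀ i j, Measure.map (D i) μ = Measure.map (D j) μ)
    (hDint : ∀ i, Integrable (D i) μ) (c : ℝ) (m : ℕ) (hm : 1 ≤ m) :
    ∫ ω, msup (fun i => c - D (i+1) ω) m ∂μ
      = ∫ ω, msup (fun i => c - D (i+1) ω) (m-1) ∂μ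
        + (1 / (m : ℝ)) * ∫ ω, max (psum (fun i => c - D (i+1) ω) m) 0 ∂μ := by
  classical
  set g : (Fin m → ℝ) → ℝ :=
    fun x => msup (extv c m x) m - msup (extv c m x) (m-1) with hg_def
  have hg : Measurable g :=
    (measurable_msup_extv c m m).sub (measurable_msup_extv c m (m-1))
  -- cyclic index maps
  set e : ℕ → ℕ → ℕ := fun t i => (t + i) % m + 1 with he_def
  have hcomp : ∀ t ω, g (fun i : Fin m => D (e t i.val) ω)
      = msup (fun i => c - D (e t i) ω) m - msup (fun i => c - D (e t i) ω) (m-1) := by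
    intro t ω
    rw [hg_def]
    dsimp only
    rw [comp_msup_eq c m m le_rfl (e t) (fun j => D j ω),
      comp_msup_eq c m (m-1) (Nat.sub_le m 1) (e t) (fun j => D j ω)]
  -- pathwise cycle lemma
  have hpath : ∀ ω, ∑ t ∈ Finset.range m,
      (msup (fun i => c - D (e t i) ω) m - msup (fun i => c - D (e t i) ω) (m-1))
      = max (psum (fun i => c - D (i+1) ω) m) 0 := by
    intro ω
    have := cycle_sum (fun i => c - D (i+1) ω) m hm
    convert this using 2
  -- integrate
  have hint : ∀ t, Integrable (fun ω =>
      msup (fun i => c - D (e t i) ω) m - msup (fun i => c - D (e t i) ω) (m-1)) μ :=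
    fun t => (integrable_msup_D hDmeas hDint c (e t) m).sub
      (integrable_msup_D hDmeas hDint c (e t) (m-1))
  have hsum : ∫ ω, max (psum (fun i => c - D (i+1) ω) m) 0 ∂μ
      = ∑ t ∈ Finset.range m, ∫ ω,
          (msup (fun i => c - D (e t i) ω) m - msup (fun i => c - D (e t i) ω) (m-1)) ∂μ := by
    rw [← integral_finset_sum _ (fun t _ => hint t)]
    refine integral_congr_ae (Filter.Eventually.of_forall fun ω => ?_)
    exact (hpath ω).symm
  -- each term equals the t = 0 term via exchangeability
  have hterm : ∀ t, ∫ ω,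
      (msup (fun i => c - D (e t i) ω) m - msup (fun i => c - D (e t i) ω) (m-1)) ∂μ
      = ∫ ω, (msup (fun i => c - D (i+1) ω) m - msup (fun i => c - D (i+1) ω) (m-1)) ∂μ := by
    intro t
    have h1 : ∫ ω, (msup (fun i => c - D (e t i) ω) m
        - msup (fun i => c - D (e t i) ω) (m-1)) ∂μ
        = ∫ ω, g (fun i : Fin m => D (e t i.val) ω) ∂μ := by
      refine integral_congr_ae (Filter.Eventually.of_forall fun ω => ?_)
      exact (hcomp t ω).symm
    have h0 : ∫ ω, (msup (fun i => c - D (i+1) ω) m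
        - msup (fun i => c - D (i+1) ω) (m-1)) ∂μ
        = ∫ ω, g (fun i : Fin m => D (i.val + 1) ω) ∂μ := by
      refine integral_congr_ae (Filter.Eventually.of_forall fun ω => ?_)
      rw [hg_def]
      dsimp only
      rw [comp_msup_eq c m m le_rfl (fun i => i + 1) (fun j => D j ω),
        comp_msup_eq c m (m-1) (Nat.sub_le m 1) (fun i => i + 1) (fun j => D j ω)]
    rw [h1, h0]
    exact integral_comp_vec_eq hDmeas hindep hident
      (fun i : Fin m => e t i.val) (fun i : Fin m => i.val + 1)
      (cyc_inj m t) (fun i j h => Fin.ext (Nat.succ_injective h)) g hg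
  rw [hsum]
  rw [Finset.sum_congr rfl (fun t _ => hterm t), Finset.sum_const, Finset.card_range]
  rw [integral_sub (integrable_msup_D hDmeas hDint c (fun i => i + 1) m)
    (integrable_msup_D hDmeas hDint c (fun i => i + 1) (m-1))]
  have hm0 : (m : ℝ) ≠ 0 := by positivity
  push_cast
  field_simp
  rw [nsmul_eq_mul]; ring

lemma mfun_identity (hDmeas : ∀ i, Measurable (D i))
    (hindep : iIndepFun D μ)
    (hident : ∀ i j, Measure.map (D i) μ = Measure.map (D j) μ)
    (hDint : ∀ i, Integrable (D i) μ) (c : ℝ) : ∀ n : ℕ,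
    ∫ ω, msup (fun i => c - D (i+1) ω) n ∂μ
      = ∑ j ∈ Finset.Icc 1 n, (1 / (j : ℝ)) *
          ∫ ω, max (psum (fun i => c - D (i+1) ω) j) 0 ∂μ := by
  intro n
  induction n with
  | zero => simp [msup]
  | succ n ih =>
    rw [step_identity hDmeas hindep hident hDint c (n+1) (by omega)]
    simp only [Nat.add_sub_cancel]
    rw [ih, Finset.sum_Icc_succ_top (by omega : 1 ≤ n+1)]

lemma W_eq_msup (c : ℝ) (W : ℕ → Ω → ℝ)
    (hW1 : ∀ ω, W 1 ω = max (c - D 1 ω) 0)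
    (hWn : ∀ n, 2 ≤ n → ∀ ω, W n ω = max (W (n - 1) ω + c - D n ω) 0) :
    ∀ n, 1 ≤ n → ∀ ω, W n ω = msup (fun i => c - D (n - i) ω) n := by
  intro n hn
  induction n, hn using Nat.le_induction with
  | base =>
    intro ω
    rw [hW1 ω]
    simp [msup, psum, max_comm]
  | succ n hn ih =>
    intro ω
    rw [hWn (n+1) (by omega) ω]
    simp only [Nat.add_sub_cancel]
    rw [ih ω]
    have hshift : msup (fun i => c - D (n+1-i) ω) (n+1)
        = max (msup (fun i => c - D (n-i) ω) n + (c - D (n+1) ω)) 0 := by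
      have h1 : msup (fun i => (fun i => c - D (n+1-i) ω) (i+1)) n
          = msup (fun i => c - D (n-i) ω) n :=
        msup_congr n (fun i _ => by simp only []; congr 2; omega)
      rw [msup_succ_shift (fun i => c - D (n+1-i) ω) n, h1]
      norm_num
    rw [hshift, add_sub_assoc]

end main

/-- Kingman's identity for the Lindley-type recursion
`W₁ = (c − D₁)⁺`, `Wₙ = (W_{n−1} + c − Dₙ)⁺`, where the `Dᵢ` (indexed from 1)
are i.i.d. nonnegative integer-valued random variables and `0 ≤ c ≤ E[D₁]`:
for every `n ≥ 1`,
`E[Wₙ] = ∑_{j=1}^n (1/j) · E[(j·c − ∑_{i=1}^j Dᵢ)⁺]`. -/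
theorem kingman_identity_lindley
    {Ω : Type*} [MeasurableSpace Ω] (μ : Measure Ω) [IsProbabilityMeasure μ]
    (D : ℕ → Ω → ℝ)
    (hDmeas : ∀ i, Measurable (D i))
    (hDnonnegInt : ∀ i ω, ∃ k : ℕ, D i ω = (k : ℝ))
    (hindep : iIndepFun D μ)
    (hident : ∀ i j, Measure.map (D i) μ = Measure.map (D j) μ)
    (hDint : ∀ i, Integrable (D i) μ)
    (c : ℝ) (hc0 : 0 ≤ c) (hcle : c ≤ ∫ ω, D 1 ω ∂μ)
    (W : ℕ → Ω → ℝ)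
    (hW1 : ∀ ω, W 1 ω = max (c - D 1 ω) 0)
    (hWn : ∀ n, 2 ≤ n → ∀ ω, W n ω = max (W (n - 1) ω + c - D n ω) 0) :
    ∀ n, 1 ≤ n →
      ∫ ω, W n ω ∂μ
        = ∑ j ∈ Finset.Icc 1 n, (1 / (j : ℝ)) *
            ∫ ω, max ((j : ℝ) * c - ∑ i ∈ Finset.Icc 1 j, D i ω) 0 ∂μ := by
  intro n hn
  have h1 : ∫ ω, W n ω ∂μ = ∫ ω, msup (fun i => c - D (n - i) ω) n ∂μ :=
    integral_congr_ae (Filter.Eventually.of_forall (W_eq_msup c W hW1 hWn n hn))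
  have h2 : ∫ ω, msup (fun i => c - D (n - i) ω) n ∂μ
      = ∫ ω, msup (fun i => c - D (i+1) ω) n ∂μ := by
    set g : (Fin n → ℝ) → ℝ := fun x => msup (extv c n x) n with hg_def
    have hg : Measurable g := measurable_msup_extv c n n
    have ha : ∫ ω, msup (fun i => c - D (n - i) ω) n ∂μ
        = ∫ ω, g (fun i : Fin n => D (n - i.val) ω) ∂μ := by
      refine integral_congr_ae (Filter.Eventually.of_forall fun ω => ?_)
      rw [hg_def]; dsimp only
      rw [comp_msup_eq c n n le_rfl (fun i => n - i) (fun j => D j ω)]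
    have hb : ∫ ω, msup (fun i => c - D (i+1) ω) n ∂μ
        = ∫ ω, g (fun i : Fin n => D (i.val + 1) ω) ∂μ := by
      refine integral_congr_ae (Filter.Eventually.of_forall fun ω => ?_)
      rw [hg_def]; dsimp only
      rw [comp_msup_eq c n n le_rfl (fun i => i + 1) (fun j => D j ω)]
    rw [ha, hb]
    exact integral_comp_vec_eq hDmeas hindep hident _ _
      (fun i j h => Fin.ext (by have := i.isLt; have := j.isLt; omega))
      (fun i j h => Fin.ext (Nat.succ_injective h)) g hg
  rw [h1, h2, mfun_identity hDmeas hindep hident hDint c n]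
  refine Finset.sum_congr rfl (fun j hj => ?_)
  congr 1
  refine integral_congr_ae (Filter.Eventually.of_forall fun ω => ?_)
  dsimp only
  have hIcc : ∑ i ∈ Finset.Icc 1 j, D i ω = ∑ i ∈ Finset.range j, D (i+1) ω := by
    rw [← Finset.Ico_add_one_right_eq_Icc, Finset.sum_Ico_eq_sum_range]
    exact Finset.sum_congr (by norm_num) (fun i _ => by rw [Nat.add_comm])
  rw [hIcc]
  congr 1
  unfold psum
  rw [Finset.sum_sub_distrib, Finset.sum_const, Finset.card_range, nsmul_eq_mul]
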